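/- The Bayes risk is monotonically non-increasing in the number of demonstrations: ε_Bayes^{t+1} ≤ ε_Bayes^t for all t ∈ ℕ. -/

import Mathlib

open Finset

/-- Conditional mutual information `I(A ; C | B)` of a joint pmf `w` on `A × B × C`. -/
noncomputable def condMI {A B C : Type*} [Fintype A] [Fintype B] [Fintype C]
    (w : A → B → C → ℝ) : ℝ :=
  ∑ a, ∑ b, ∑ c, w a b c *
    Real.log (w a b c * (∑ a', ∑ c', w a' b c') /
      ((∑ c', w a b c') * (∑ a', w a' b c)))

/-- Weight of a demonstration sequence `d = ((X₁,Y₁),…,(Xₙ,Yₙ))` given environment `e`,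
with inputs i.i.d. from `μ` and outputs drawn from `k e x`. -/
noncomputable def demoW {E X Y : Type*} {n : ℕ}
    (μ : X → ℝ) (k : E → X → Y → ℝ) (e : E) (d : Fin n → X × Y) : ℝ :=
  ∏ i, μ (d i).1 * k e (d i).1 (d i).2

/-- Bayes risk `ε_Bayes^t = I(Y_{t+1}; e | X_{t+1}, D_t)` in the hierarchical generative
model with prior `π` on environments. -/
noncomputable def epsBayes {E X Y : Type*} [Fintype E] [Fintype X] [Fintype Y]
    (π : E → ℝ) (μ : X → ℝ) (k : E → X → Y → ℝ) (t : ℕ) : ℝ :=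
  condMI (fun (e : E) (bc : (Fin t → X × Y) × X) (y : Y) =>
    π e * demoW μ k e bc.1 * μ bc.2 * k e bc.2 y)

/-! ### Auxiliary lemmas -/

/-- Gibbs' inequality. -/
lemma gibbs_aux {ι : Type*} [Fintype ι] (p q : ι → ℝ) (hp : ∀ i, 0 < p i)
    (hq : ∀ i, 0 < q i) (h : ∑ i, q i ≤ ∑ i, p i) :
    0 ≤ ∑ i, p i * Real.log (p i / q i) := by
  have key : ∀ i ∈ Finset.univ, p i - q i ≤ p i * Real.log (p i / q i) := by
    intro i _
    have h1 : Real.log (q i / p i) ≤ q i / p i - 1 :=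
      Real.log_le_sub_one_of_pos (div_pos (hq i) (hp i))
    have h3 := mul_le_mul_of_nonneg_left h1 (hp i).le
    have h4 : p i * (q i / p i - 1) = q i - p i := by
      rw [mul_sub, mul_one, mul_div_cancel₀ _ (hp i).ne']
    have h5 : p i * Real.log (p i / q i) = -(p i * Real.log (q i / p i)) := by
      rw [show Real.log (p i / q i) = - Real.log (q i / p i) by
        rw [← Real.log_inv, inv_div]]
      ring
    linarith
  calc (0:ℝ) ≤ ∑ i, p i - ∑ i, q i := by linarith
    _ = ∑ i, (p i - q i) := (Finset.sum_sub_distrib p q).symm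
    _ ≤ ∑ i, p i * Real.log (p i / q i) := Finset.sum_le_sum key

lemma demoW_pos {E X Y : Type*} {n : ℕ} {μ : X → ℝ} {k : E → X → Y → ℝ}
    (hμ : ∀ x, 0 < μ x) (hk : ∀ e x y, 0 < k e x y) (e : E) (d : Fin n → X × Y) :
    0 < demoW μ k e d :=
  Finset.prod_pos fun _ _ => mul_pos (hμ _) (hk _ _ _)

lemma demoW_cons {E X Y : Type*} {n : ℕ} (μ : X → ℝ) (k : E → X → Y → ℝ)
    (e : E) (z : X × Y) (d : Fin n → X × Y) :
    demoW μ k e (Fin.cons z d) = μ z.1 * k e z.1 z.2 * demoW μ k e d := by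
  unfold demoW
  rw [Fin.prod_univ_succ]
  simp

lemma pair_sum {E X Y : Type*} [Fintype X] [Fintype Y] (μ : X → ℝ) (k : E → X → Y → ℝ)
    (hμsum : ∑ x, μ x = 1) (hksum : ∀ e x, ∑ y, k e x y = 1) (e : E) :
    ∑ z : X × Y, μ z.1 * k e z.1 z.2 = 1 := by
  rw [Fintype.sum_prod_type]
  simp_rw [← Finset.mul_sum, hksum, mul_one]
  exact hμsum

lemma demoW_sum {E X Y : Type*} [Fintype X] [Fintype Y] {n : ℕ}
    (μ : X → ℝ) (k : E → X → Y → ℝ)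
    (hμsum : ∑ x, μ x = 1) (hksum : ∀ e x, ∑ y, k e x y = 1) (e : E) :
    ∑ d : Fin n → X × Y, demoW μ k e d = 1 := by
  induction n with
  | zero => simp [demoW]
  | succ n ih =>
    rw [← (Fin.consEquiv fun _ => (X × Y)).sum_comp (demoW μ k e),
      Fintype.sum_prod_type]
    have : ∀ (z : X × Y) (d : Fin n → X × Y),
        demoW μ k e ((Fin.consEquiv fun _ => (X × Y)) (z, d))
          = μ z.1 * k e z.1 z.2 * demoW μ k e d := fun z d => demoW_cons μ k e z d
    simp_rw [this, ← Finset.mul_sum, ih, mul_one]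
    exact pair_sum μ k hμsum hksum e

section Main
set_option linter.unusedSectionVars false

variable {E X Y : Type*} [Fintype E] [Fintype X] [Fintype Y]
variable (π : E → ℝ) (μ : X → ℝ) (k : E → X → Y → ℝ)

/-- Joint weight of `(b, y)` (environment marginalized out). -/
noncomputable def Qt (t : ℕ) (b : (Fin t → X × Y) × X) (y : Y) : ℝ :=
  ∑ e, π e * demoW μ k e b.1 * μ b.2 * k e b.2 y

/-- Weight of `b`. -/
noncomputable def Mt (t : ℕ) (b : (Fin t → X × Y) × X) : ℝ :=
  ∑ y, Qt π μ k t b y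

/-- Joint weight of `(z, b, y)` where `z` is one extra demonstration. -/
noncomputable def Rt (t : ℕ) (z : X × Y) (b : (Fin t → X × Y) × X) (y : Y) : ℝ :=
  ∑ e, μ z.1 * k e z.1 z.2 * (π e * demoW μ k e b.1 * μ b.2 * k e b.2 y)

/-- Weight of `(z, b)`. -/
noncomputable def MRt (t : ℕ) (z : X × Y) (b : (Fin t → X × Y) × X) : ℝ :=
  ∑ y, Rt π μ k t z b y

variable {π μ k}
variable (hπ : ∀ e, 0 < π e) (hμ : ∀ x, 0 < μ x) (hk : ∀ e x y, 0 < k e x y)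

section Pos
include hπ hμ hk

lemma Qt_pos [Nonempty E] (t : ℕ) (b : (Fin t → X × Y) × X) (y : Y) :
    0 < Qt π μ k t b y :=
  Finset.sum_pos (fun e _ => mul_pos (mul_pos (mul_pos (hπ e) (demoW_pos hμ hk e b.1))
    (hμ _)) (hk _ _ _)) Finset.univ_nonempty

lemma Mt_pos [Nonempty E] [Nonempty Y] (t : ℕ) (b : (Fin t → X × Y) × X) :
    0 < Mt π μ k t b :=
  Finset.sum_pos (fun y _ => Qt_pos hπ hμ hk t b y) Finset.univ_nonempty

lemma Rt_pos [Nonempty E] (t : ℕ) (z : X × Y) (b : (Fin t → X × Y) × X) (y : Y) :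
    0 < Rt π μ k t z b y :=
  Finset.sum_pos (fun e _ => mul_pos (mul_pos (hμ _) (hk _ _ _))
    (mul_pos (mul_pos (mul_pos (hπ e) (demoW_pos hμ hk e b.1)) (hμ _)) (hk _ _ _)))
    Finset.univ_nonempty

lemma MRt_pos [Nonempty E] [Nonempty Y] (t : ℕ) (z : X × Y) (b : (Fin t → X × Y) × X) :
    0 < MRt π μ k t z b :=
  Finset.sum_pos (fun y _ => Rt_pos hπ hμ hk t z b y) Finset.univ_nonempty

end Pos

lemma Rt_sum (hμsum : ∑ x, μ x = 1) (hksum : ∀ e x, ∑ y, k e x y = 1)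
    (t : ℕ) (b : (Fin t → X × Y) × X) (y : Y) :
    ∑ z : X × Y, Rt π μ k t z b y = Qt π μ k t b y := by
  unfold Rt Qt
  rw [Finset.sum_comm]
  refine Finset.sum_congr rfl fun e _ => ?_
  rw [← Finset.sum_mul, pair_sum μ k hμsum hksum e, one_mul]


include hπ hμ hk in
lemma epsBayes_decomp [Nonempty E] [Nonempty Y]
    (hksum : ∀ e x, ∑ y, k e x y = 1)
    (hμsum : ∑ x, μ x = 1) (t : ℕ) :
    epsBayes π μ k t =
      (∑ e, π e * ∑ x, μ x * ∑ y, k e x y * Real.log (k e x y))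
      + ∑ b, ∑ y, Qt π μ k t b y * Real.log (Mt π μ k t b / Qt π μ k t b y) := by
  unfold epsBayes condMI
  have hsum_y : ∀ (e : E) (b : (Fin t → X × Y) × X),
      ∑ y', π e * demoW μ k e b.1 * μ b.2 * k e b.2 y'
        = π e * demoW μ k e b.1 * μ b.2 := by
    intro e b
    rw [← Finset.mul_sum, hksum, mul_one]
  have hmarg : ∀ b : (Fin t → X × Y) × X,
      (∑ e', ∑ y', π e' * demoW μ k e' b.1 * μ b.2 * k e' b.2 y') = Mt π μ k t b := by
    intro b
    unfold Mt Qt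
    exact Finset.sum_comm
  have step1 : ∀ (e : E) (b : (Fin t → X × Y) × X) (y : Y),
      (π e * demoW μ k e b.1 * μ b.2 * k e b.2 y) *
        Real.log ((π e * demoW μ k e b.1 * μ b.2 * k e b.2 y) *
          (∑ e', ∑ y', π e' * demoW μ k e' b.1 * μ b.2 * k e' b.2 y') /
          ((∑ y', π e * demoW μ k e b.1 * μ b.2 * k e b.2 y') *
            (∑ e', π e' * demoW μ k e' b.1 * μ b.2 * k e' b.2 y)))
      = (π e * demoW μ k e b.1 * μ b.2 * k e b.2 y) * Real.log (k e b.2 y)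
        + (π e * demoW μ k e b.1 * μ b.2 * k e b.2 y) *
            Real.log (Mt π μ k t b / Qt π μ k t b y) := by
    intro e b y
    have hW := demoW_pos hμ hk e b.1
    have hu : (0:ℝ) < π e * demoW μ k e b.1 * μ b.2 :=
      mul_pos (mul_pos (hπ e) hW) (hμ _)
    have hQ : (0:ℝ) < Qt π μ k t b y := Qt_pos hπ hμ hk t b y
    have hM : (0:ℝ) < Mt π μ k t b := Mt_pos hπ hμ hk t b
    have hQ' : (∑ e', π e' * demoW μ k e' b.1 * μ b.2 * k e' b.2 y) = Qt π μ k t b y := rfl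
    rw [hsum_y, hmarg, hQ']
    rw [show (π e * demoW μ k e b.1 * μ b.2 * k e b.2 y) * Mt π μ k t b /
        (π e * demoW μ k e b.1 * μ b.2 * Qt π μ k t b y)
        = k e b.2 y * (Mt π μ k t b / Qt π μ k t b y) by
      field_simp
      field_simp [(hπ e).ne', (hμ b.2).ne']]
    rw [Real.log_mul (hk e b.2 y).ne' (div_pos hM hQ).ne', mul_add]
  simp_rw [step1, Finset.sum_add_distrib]
  congr 1
  · -- first piece
    refine Finset.sum_congr rfl fun e _ => ?_
    rw [Fintype.sum_prod_type]
    dsimp only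
    simp_rw [show ∀ (d : Fin t → X × Y) (x : X) (y : Y),
        π e * demoW μ k e d * μ x * k e x y * Real.log (k e x y)
          = demoW μ k e d * (π e * (μ x * (k e x y * Real.log (k e x y))))
      from fun _ _ _ => by ring,
      ← Finset.mul_sum, ← Finset.sum_mul, demoW_sum μ k hμsum hksum e, one_mul]
  · -- second piece
    rw [Finset.sum_comm]
    refine Finset.sum_congr rfl fun b _ => ?_
    rw [Finset.sum_comm]
    refine Finset.sum_congr rfl fun y _ => ?_
    rw [← Finset.sum_mul]
    rfl

include hπ hμ hk in
lemma S2_mono [Nonempty E] [Nonempty Y]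
    (hμsum : ∑ x, μ x = 1) (hksum : ∀ e x, ∑ y, k e x y = 1) (t : ℕ) :
    (∑ b, ∑ y, Qt π μ k (t+1) b y * Real.log (Mt π μ k (t+1) b / Qt π μ k (t+1) b y))
      ≤ ∑ b, ∑ y, Qt π μ k t b y * Real.log (Mt π μ k t b / Qt π μ k t b y) := by
  have hQcons : ∀ (z : X × Y) (b : (Fin t → X × Y) × X) (y : Y),
      Qt π μ k (t+1) (Fin.cons z b.1, b.2) y = Rt π μ k t z b y := by
    intro z b y
    unfold Qt Rt
    refine Finset.sum_congr rfl fun e _ => ?_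
    dsimp only
    rw [demoW_cons]
    ring
  have hMcons : ∀ (z : X × Y) (b : (Fin t → X × Y) × X),
      Mt π μ k (t+1) (Fin.cons z b.1, b.2) = MRt π μ k t z b := by
    intro z b
    unfold Mt MRt
    exact Finset.sum_congr rfl fun y _ => hQcons z b y
  -- re-index the (t+1)-sum
  have hbij := (((Equiv.prodAssoc (X × Y) (Fin t → X × Y) X).symm.trans
    (Equiv.prodCongr (Fin.consEquiv fun _ => (X × Y)) (Equiv.refl X)))).bijective
  have hL : (∑ b, ∑ y, Qt π μ k (t+1) b y *
        Real.log (Mt π μ k (t+1) b / Qt π μ k (t+1) b y))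
      = ∑ z : X × Y, ∑ b : (Fin t → X × Y) × X, ∑ y,
          Rt π μ k t z b y * Real.log (MRt π μ k t z b / Rt π μ k t z b y) := by
    rw [← Fintype.sum_bijective _ hbij
      (fun p : (X × Y) × ((Fin t → X × Y) × X) => ∑ y,
        Rt π μ k t p.1 p.2 y * Real.log (MRt π μ k t p.1 p.2 / Rt π μ k t p.1 p.2 y))
      (fun b => ∑ y, Qt π μ k (t+1) b y *
        Real.log (Mt π μ k (t+1) b / Qt π μ k (t+1) b y))
      (fun p => Finset.sum_congr rfl fun y _ => by rw [← hQcons p.1 p.2 y, ← hMcons p.1 p.2]; rfl),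
      Fintype.sum_prod_type]
  have hR : (∑ b, ∑ y, Qt π μ k t b y * Real.log (Mt π μ k t b / Qt π μ k t b y))
      = ∑ b : (Fin t → X × Y) × X, ∑ z : X × Y, ∑ y,
          Rt π μ k t z b y * Real.log (Mt π μ k t b / Qt π μ k t b y) := by
    refine Finset.sum_congr rfl fun b _ => ?_
    rw [Finset.sum_comm]
    refine Finset.sum_congr rfl fun y _ => ?_
    rw [← Finset.sum_mul, Rt_sum hμsum hksum t b y]
  rw [hL, hR, Finset.sum_comm]
  refine Finset.sum_le_sum fun b _ => Finset.sum_le_sum fun z _ => ?_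
  -- Gibbs' inequality for fixed (b, z)
  have hQ : ∀ y, 0 < Qt π μ k t b y := Qt_pos hπ hμ hk t b
  have hM : 0 < Mt π μ k t b := Mt_pos hπ hμ hk t b
  have hp : ∀ y, 0 < Rt π μ k t z b y := Rt_pos hπ hμ hk t z b
  have hMR : 0 < MRt π μ k t z b := MRt_pos hπ hμ hk t z b
  set p : Y → ℝ := fun y => Rt π μ k t z b y with hpdef
  set q : Y → ℝ := fun y => Qt π μ k t b y * (MRt π μ k t z b / Mt π μ k t b) with hqdef
  have hq : ∀ y, 0 < q y := fun y => mul_pos (hQ y) (div_pos hMR hM)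
  have hsum : ∑ y, q y ≤ ∑ y, p y := by
    have h1 : ∑ y, q y = MRt π μ k t z b := by
      rw [hqdef]
      rw [← Finset.sum_mul]
      rw [show (∑ y, Qt π μ k t b y) = Mt π μ k t b from rfl]
      rw [mul_div_assoc', mul_div_cancel_left₀ _ hM.ne']
    have h2 : ∑ y, p y = MRt π μ k t z b := rfl
    rw [h1, h2]
  have hgibbs := gibbs_aux p q hp hq hsum
  have hpt : ∀ y, p y * Real.log (p y / q y)
      = Rt π μ k t z b y * Real.log (Mt π μ k t b / Qt π μ k t b y)
        - Rt π μ k t z b y * Real.log (MRt π μ k t z b / Rt π μ k t z b y) := by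
    intro y
    rw [hpdef, hqdef]
    dsimp only
    rw [Real.log_div (hp y).ne' (hq y).ne',
      Real.log_mul (hQ y).ne' (div_pos hMR hM).ne',
      Real.log_div hMR.ne' hM.ne',
      Real.log_div hM.ne' (hQ y).ne',
      Real.log_div hMR.ne' (hp y).ne']
    ring
  simp_rw [hpt, Finset.sum_sub_distrib] at hgibbs
  linarith

end Main

/-- The Bayes risk is monotonically non-increasing in the number of demonstrations:
`ε_Bayes^{t+1} ≤ ε_Bayes^t` for all `t ∈ ℕ`. -/
theorem bayes_risk_antitone
    {E X Y : Type*} [Fintype E] [Fintype X] [Fintype Y]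
    (π : E → ℝ) (μ : X → ℝ) (k : E → X → Y → ℝ)
    (hπ : ∀ e, 0 < π e) (hπsum : ∑ e, π e = 1)
    (hμ : ∀ x, 0 < μ x) (hμsum : ∑ x, μ x = 1)
    (hk : ∀ e x y, 0 < k e x y) (hksum : ∀ e x, ∑ y, k e x y = 1) :
    ∀ t : ℕ, epsBayes π μ k (t + 1) ≤ epsBayes π μ k t := by
  have hE : Nonempty E := by
    by_contra h
    rw [not_nonempty_iff] at h
    rw [Finset.univ_eq_empty, Finset.sum_empty] at hπsum
    exact one_ne_zero hπsum.symm
  have hX : Nonempty X := by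
    by_contra h
    rw [not_nonempty_iff] at h
    rw [Finset.univ_eq_empty, Finset.sum_empty] at hμsum
    exact one_ne_zero hμsum.symm
  have hY : Nonempty Y := by
    by_contra h
    rw [not_nonempty_iff] at h
    obtain ⟨e⟩ := hE
    obtain ⟨x⟩ := hX
    have h1 := hksum e x
    rw [Finset.univ_eq_empty, Finset.sum_empty] at h1
    exact one_ne_zero h1.symm
  intro t
  rw [epsBayes_decomp hπ hμ hk hksum hμsum (t+1),
    epsBayes_decomp hπ hμ hk hksum hμsum t]
  exact add_le_add_right (S2_mono hπ hμ hk hμsum hksum t) _
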